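/- arXiv:1808.01689 — 3 statements merged into one kernel-verified Lean document; each statement's English description precedes it below -/
import Mathlib

section
/- The vector fields e = ∂/∂t₁, h = -2t₁∂/∂t₁ - 4t₂∂/∂t₂ - 6t₃∂/∂t₃, and f = -(t₁² - t₂/12)∂/∂t₁ - (4t₁t₂ - 6t₃)∂/∂t₂ - (6t₁t₃ - t₂²/3)∂/∂t₃ on ℂ³ satisfy the sl₂ commutation relations [h,e] = 2e, [h,f] = -2f, [e,f] = h. -/
open MvPolynomial

/-- The derivation `e = ∂/∂t₁` on ℂ[t₁,t₂,t₃]. -/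
noncomputable def eD : Derivation ℂ (MvPolynomial (Fin 3) ℂ) (MvPolynomial (Fin 3) ℂ) :=
  mkDerivation ℂ ![1, 0, 0]

/-- The derivation `h = -2t₁∂/∂t₁ - 4t₂∂/∂t₂ - 6t₃∂/∂t₃`. -/
noncomputable def hD : Derivation ℂ (MvPolynomial (Fin 3) ℂ) (MvPolynomial (Fin 3) ℂ) :=
  mkDerivation ℂ ![-2 * X 0, -4 * X 1, -6 * X 2]

/-- The derivation
`f = -(t₁² - t₂/12)∂/∂t₁ - (4t₁t₂ - 6t₃)∂/∂t₂ - (6t₁t₃ - t₂²/3)∂/∂t₃`. -/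
noncomputable def fD : Derivation ℂ (MvPolynomial (Fin 3) ℂ) (MvPolynomial (Fin 3) ℂ) :=
  mkDerivation ℂ ![-(X 0 ^ 2 - C (1/12 : ℂ) * X 1), -(4 * X 0 * X 1 - 6 * X 2),
    -(6 * X 0 * X 2 - C (1/3 : ℂ) * X 1 ^ 2)]

private lemma mapTwo (D : Derivation ℂ (MvPolynomial (Fin 3) ℂ) (MvPolynomial (Fin 3) ℂ)) :
    D 2 = 0 := D.map_natCast 2

private lemma mapFour (D : Derivation ℂ (MvPolynomial (Fin 3) ℂ) (MvPolynomial (Fin 3) ℂ)) :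
    D 4 = 0 := D.map_natCast 4

private lemma mapSix (D : Derivation ℂ (MvPolynomial (Fin 3) ℂ) (MvPolynomial (Fin 3) ℂ)) :
    D 6 = 0 := D.map_natCast 6

private lemma brkE : ⁅hD, eD⁆ = (2:ℂ) • eD := by
  apply derivation_ext; intro i; fin_cases i <;>
    simp [eD, hD, Derivation.commutator_apply, mkDerivation_X, Derivation.leibniz,
      mapTwo, mapFour, mapSix, smul_eq_C_mul, map_ofNat] <;> ring

private lemma brkF : ⁅hD, fD⁆ = (-2:ℂ) • fD := by
  apply derivation_ext; intro i; fin_cases i <;>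
    simp [fD, hD, Derivation.commutator_apply, mkDerivation_X, Derivation.leibniz,
      mapTwo, mapFour, mapSix, smul_eq_C_mul, map_ofNat] <;> ring

private lemma brkH : ⁅eD, fD⁆ = hD := by
  apply derivation_ext; intro i; fin_cases i <;>
    simp [fD, hD, eD, Derivation.commutator_apply, mkDerivation_X, Derivation.leibniz,
      mapTwo, mapFour, mapSix, smul_eq_C_mul, map_ofNat] <;> ring

/-- The vector fields `e`, `h`, `f` on ℂ³ satisfy the sl₂ commutation relations
`[h,e] = 2e`, `[h,f] = -2f`, `[e,f] = h`, where the bracket of derivations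
`D₁, D₂` is `D₁∘D₂ - D₂∘D₁`. -/
theorem sl2_relations (p : MvPolynomial (Fin 3) ℂ) :
    hD (eD p) - eD (hD p) = 2 * eD p ∧
    hD (fD p) - fD (hD p) = -2 * fD p ∧
    eD (fD p) - fD (eD p) = hD p := by
  refine ⟨?_, ?_, ?_⟩
  · have := congrArg (fun D : Derivation ℂ _ _ => D p) brkE
    simpa [Derivation.commutator_apply, smul_eq_C_mul, map_ofNat] using this
  · have := congrArg (fun D : Derivation ℂ _ _ => D p) brkF
    simp only [Derivation.commutator_apply, Derivation.smul_apply, smul_eq_C_mul] at this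
    rw [this, show ((-2:ℂ)) = -(2:ℂ) by ring, map_neg, map_ofNat]
  · have := congrArg (fun D : Derivation ℂ _ _ => D p) brkH
    simpa [Derivation.commutator_apply] using this
end

section
/- If (φ₁, φ₂, φ₃) is a solution of the Ramanujan differential equation φ₁' = φ₁² - (1/12)φ₂, φ₂' = 4φ₁φ₂ - 6φ₃, φ₃' = 6φ₁φ₃ - (1/3)φ₂² on a domain of the upper half plane, then for every A ∈ SL(2,ℂ) the triple (φ₁|₂¹A, φ₂|₄⁰A, φ₃|₆⁰A) is also a solution of the same differential equation (Halphen property). -/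
/-- Slash operator `f|ₘ⁰A (τ) = (cτ+d)⁻ᵐ f((aτ+b)/(cτ+d))` for `A = [[a,b],[c,d]]`. -/
noncomputable def slash0 (m : ℕ) (A : Matrix (Fin 2) (Fin 2) ℂ) (f : ℂ → ℂ) : ℂ → ℂ :=
  fun τ => ((A 1 0 * τ + A 1 1) ^ m)⁻¹ * f ((A 0 0 * τ + A 0 1) / (A 1 0 * τ + A 1 1))

/-- Slash operator `f|ₘ¹A (τ) = (cτ+d)⁻ᵐ f(Aτ) - c(cτ+d)⁻¹`. -/
noncomputable def slash1 (m : ℕ) (A : Matrix (Fin 2) (Fin 2) ℂ) (f : ℂ → ℂ) : ℂ → ℂ :=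
  fun τ => ((A 1 0 * τ + A 1 1) ^ m)⁻¹ * f ((A 0 0 * τ + A 0 1) / (A 1 0 * τ + A 1 1))
    - A 1 0 * (A 1 0 * τ + A 1 1)⁻¹

/-- Halphen property: if `(φ₁,φ₂,φ₃)` solves the Ramanujan differential equation
`φ₁' = φ₁² - φ₂/12`, `φ₂' = 4φ₁φ₂ - 6φ₃`, `φ₃' = 6φ₁φ₃ - φ₂²/3` on a domain `U` of the
upper half plane, then for every `A ∈ SL(2,ℂ)` the triple `(φ₁|₂¹A, φ₂|₄⁰A, φ₃|₆⁰A)`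
solves the same equation (at every point whose image under `A` lies in `U`). -/
theorem halphen_property (U : Set ℂ) (hU : U ⊆ {z : ℂ | 0 < z.im})
    (φ₁ φ₂ φ₃ : ℂ → ℂ)
    (hsol : ∀ τ ∈ U,
      HasDerivAt φ₁ (φ₁ τ ^ 2 - φ₂ τ / 12) τ ∧
      HasDerivAt φ₂ (4 * φ₁ τ * φ₂ τ - 6 * φ₃ τ) τ ∧
      HasDerivAt φ₃ (6 * φ₁ τ * φ₃ τ - φ₂ τ ^ 2 / 3) τ)
    (A : Matrix (Fin 2) (Fin 2) ℂ) (hA : A.det = 1) (τ : ℂ)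
    (hmem : (A 0 0 * τ + A 0 1) / (A 1 0 * τ + A 1 1) ∈ U)
    (hden : A 1 0 * τ + A 1 1 ≠ 0) :
    HasDerivAt (slash1 2 A φ₁)
      (slash1 2 A φ₁ τ ^ 2 - slash0 4 A φ₂ τ / 12) τ ∧
    HasDerivAt (slash0 4 A φ₂)
      (4 * slash1 2 A φ₁ τ * slash0 4 A φ₂ τ - 6 * slash0 6 A φ₃ τ) τ ∧
    HasDerivAt (slash0 6 A φ₃)
      (6 * slash1 2 A φ₁ τ * slash0 6 A φ₃ τ - slash0 4 A φ₂ τ ^ 2 / 3) τ := by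
  set a := A 0 0 with ha0
  set b := A 0 1 with hb0
  set c := A 1 0 with hc0
  set d := A 1 1 with hd0
  have hdet : a * d - b * c = 1 := by
    have h := hA; rw [Matrix.det_fin_two] at h; linear_combination h
  set σ := (a * τ + b) / (c * τ + d) with hσ
  obtain ⟨h1, h2, h3⟩ := hsol σ hmem
  have hJ : HasDerivAt (fun t : ℂ => c * t + d) c τ := by
    simpa using ((hasDerivAt_id τ).const_mul c).add_const d
  have hN : HasDerivAt (fun t : ℂ => a * t + b) a τ := by
    simpa using ((hasDerivAt_id τ).const_mul a).add_const b
  have hg : HasDerivAt (fun t : ℂ => (a * t + b) / (c * t + d)) (((c*τ+d)^2)⁻¹) τ := by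
    have h := hN.div hJ hden
    have hnum : a * (c * τ + d) - (a * τ + b) * c = 1 := by linear_combination hdet
    rw [hnum] at h
    rw [inv_eq_one_div]
    exact h
  have hP2 : HasDerivAt (fun t : ℂ => ((c * t + d) ^ 2)⁻¹)
      (-(2 * c) * (((c * τ + d)⁻¹) ^ 3)) τ := by
    have h := (hJ.pow 2).inv (pow_ne_zero 2 hden)
    refine h.congr_deriv ?_
    simp only [Pi.pow_apply]
    field_simp
    ring
  have hP4 : HasDerivAt (fun t : ℂ => ((c * t + d) ^ 4)⁻¹)
      (-(4 * c) * (((c * τ + d)⁻¹) ^ 5)) τ := by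
    have h := (hJ.pow 4).inv (pow_ne_zero 4 hden)
    refine h.congr_deriv ?_
    simp only [Pi.pow_apply]
    field_simp
    ring
  have hP6 : HasDerivAt (fun t : ℂ => ((c * t + d) ^ 6)⁻¹)
      (-(6 * c) * (((c * τ + d)⁻¹) ^ 7)) τ := by
    have h := (hJ.pow 6).inv (pow_ne_zero 6 hden)
    refine h.congr_deriv ?_
    simp only [Pi.pow_apply]
    field_simp
    ring
  have H1 : HasDerivAt (fun t => φ₁ ((a * t + b) / (c * t + d)))
      ((φ₁ σ ^ 2 - φ₂ σ / 12) * ((c*τ+d)^2)⁻¹) τ := h1.comp τ hg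
  have H2 : HasDerivAt (fun t => φ₂ ((a * t + b) / (c * t + d)))
      ((4 * φ₁ σ * φ₂ σ - 6 * φ₃ σ) * ((c*τ+d)^2)⁻¹) τ := h2.comp τ hg
  have H3 : HasDerivAt (fun t => φ₃ ((a * t + b) / (c * t + d)))
      ((6 * φ₁ σ * φ₃ σ - φ₂ σ ^ 2 / 3) * ((c*τ+d)^2)⁻¹) τ := h3.comp τ hg
  have hinv : HasDerivAt (fun t : ℂ => c * (c * t + d)⁻¹) (-(c^2) * (((c*τ+d)⁻¹)^2)) τ := by
    have h := (hJ.inv hden).const_mul c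
    refine h.congr_deriv ?_
    field_simp
  refine ⟨?_, ?_, ?_⟩
  · have h := (hP2.mul H1).sub hinv
    refine h.congr_deriv ?_
    simp only [slash0, slash1, ← hσ, ← inv_pow]
    ring
  · have h := hP4.mul H2
    refine h.congr_deriv ?_
    simp only [slash0, slash1, ← hσ, ← inv_pow]
    ring
  · have h := hP6.mul H3
    refine h.congr_deriv ?_
    simp only [slash0, slash1, ← hσ, ← inv_pow]
    ring
end

section
/- Every matrix A in SL(2,ℝ) with the property that the double coset SL(2,ℤ)·A·SL(2,ℤ) consists of finitely many left SL(2,ℤ)-cosets is, up to multiplication by a nonzero real scalar, a matrix with rational entries. -/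
/-- `SL(2,ℤ)` viewed as the set of real 2×2 matrices with integer entries and determinant 1. -/
def GammaR : Set (Matrix (Fin 2) (Fin 2) ℝ) :=
  {g | (∀ i j, ∃ n : ℤ, g i j = (n : ℝ)) ∧ g.det = 1}

/-- The double coset `Γ·A·Γ`. -/
def doubleCoset (A : Matrix (Fin 2) (Fin 2) ℝ) : Set (Matrix (Fin 2) (Fin 2) ℝ) :=
  {M | ∃ g ∈ GammaR, ∃ g' ∈ GammaR, M = g * A * g'}

open Matrix

lemma GammaR_one : (1 : Matrix (Fin 2) (Fin 2) ℝ) ∈ GammaR := by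
  constructor
  · intro i j
    by_cases h : i = j
    · exact ⟨1, by simp [h, Matrix.one_apply]⟩
    · exact ⟨0, by simp [Matrix.one_apply, h]⟩
  · simp

lemma GammaR_mul {g h : Matrix (Fin 2) (Fin 2) ℝ} (hg : g ∈ GammaR) (hh : h ∈ GammaR) :
    g * h ∈ GammaR := by
  obtain ⟨hg1, hg2⟩ := hg
  obtain ⟨hh1, hh2⟩ := hh
  constructor
  · intro i j
    obtain ⟨n0, hn0⟩ := hg1 i 0
    obtain ⟨n1, hn1⟩ := hg1 i 1
    obtain ⟨m0, hm0⟩ := hh1 0 j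
    obtain ⟨m1, hm1⟩ := hh1 1 j
    exact ⟨n0 * m0 + n1 * m1, by
      rw [Matrix.mul_apply, Fin.sum_univ_two, hn0, hn1, hm0, hm1]; push_cast; ring⟩
  · rw [Matrix.det_mul, hg2, hh2, one_mul]

lemma GammaR_det_isUnit {g : Matrix (Fin 2) (Fin 2) ℝ} (hg : g ∈ GammaR) : IsUnit g.det := by
  rw [hg.2]; exact isUnit_one

lemma GammaR_inv {g : Matrix (Fin 2) (Fin 2) ℝ} (hg : g ∈ GammaR) : g⁻¹ ∈ GammaR := by
  obtain ⟨hg1, hg2⟩ := hg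
  have hinv : g⁻¹ = !![g 1 1, -g 0 1; -g 1 0, g 0 0] := by
    rw [Matrix.inv_def, hg2, Matrix.adjugate_fin_two]
    simp
  constructor
  · intro i j
    obtain ⟨n00, h00⟩ := hg1 0 0
    obtain ⟨n01, h01⟩ := hg1 0 1
    obtain ⟨n10, h10⟩ := hg1 1 0
    obtain ⟨n11, h11⟩ := hg1 1 1
    fin_cases i <;> fin_cases j
    · exact ⟨n11, by rw [hinv]; simpa using h11⟩
    · exact ⟨-n01, by rw [hinv]; push_cast; simp [h01]⟩
    · exact ⟨-n10, by rw [hinv]; push_cast; simp [h10]⟩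
    · exact ⟨n00, by rw [hinv]; simpa using h00⟩
  · rw [Matrix.det_nonsing_inv, hg2]; simp

lemma unipotent_pow (E : Matrix (Fin 2) (Fin 2) ℝ) (hE : E * E = 0) (n : ℕ) :
    (1 + E) ^ n = 1 + (n : ℝ) • E := by
  induction n with
  | zero => simp
  | succ n ih =>
    rw [pow_succ, ih, add_mul, mul_add, mul_add, one_mul, mul_one, smul_mul_assoc,
      hE, smul_zero, add_zero]
    push_cast
    simp only [one_mul, add_smul, one_smul]
    abel

/-- Key lemma: conjugation by `A` of the nilpotent part of an integral unipotent is rational. -/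
lemma key (A : Matrix (Fin 2) (Fin 2) ℝ) (hA : A.det = 1)
    (hfin : ∃ F : Finset (Matrix (Fin 2) (Fin 2) ℝ), ↑F ⊆ doubleCoset A ∧
      ∀ M ∈ doubleCoset A, ∃ γ ∈ GammaR, ∃ N ∈ (F : Set (Matrix (Fin 2) (Fin 2) ℝ)),
        M = γ * N)
    (E : Matrix (Fin 2) (Fin 2) ℝ) (hE : E * E = 0) (hV : (1 + E) ∈ GammaR) :
    ∀ i j, ∃ q : ℚ, (A * E * A⁻¹) i j = (q : ℝ) := by
  obtain ⟨F, hF, hcov⟩ := hfin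
  have hAunit : IsUnit A.det := by rw [hA]; exact isUnit_one
  -- powers of V are in GammaR
  have hVpow : ∀ n : ℕ, (1 + E) ^ n ∈ GammaR := by
    intro n
    induction n with
    | zero => simpa using GammaR_one
    | succ n ih => rw [pow_succ]; exact GammaR_mul ih hV
  have hmem : ∀ n : ℕ, A * (1 + E) ^ n ∈ doubleCoset A := fun n =>
    ⟨1, GammaR_one, (1 + E) ^ n, hVpow n, by rw [one_mul]⟩
  choose γ hγ N hN heq using fun n => hcov _ (hmem n)
  -- pigeonhole
  have : ∃ m n : ℕ, m ≠ n ∧ (⟨N m, hN m⟩ : F) = ⟨N n, hN n⟩ := by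
    obtain ⟨m, n, hmn, h⟩ := Finite.exists_ne_map_eq_of_infinite
      (fun n : ℕ => (⟨N n, hN n⟩ : F))
    exact ⟨m, n, hmn, h⟩
  obtain ⟨m, n, hmn, hNeq⟩ := this
  have hNeq' : N m = N n := congrArg Subtype.val hNeq
  -- main claim for ordered pair
  have main : ∀ m n : ℕ, m < n → N m = N n →
      ∀ i j, ∃ q : ℚ, (A * E * A⁻¹) i j = (q : ℝ) := by
    intro m n hlt hNmn i j
    set k : ℕ := n - m with hk
    have hkpos : 0 < k := Nat.sub_pos_of_lt hlt
    have hnk : n = k + m := by omega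
    -- A V^n = γ n * N n,  A V^m = γ m * N m = γ m * N n
    have h1 : A * (1 + E) ^ n = γ n * N n := heq n
    have h2 : A * (1 + E) ^ m = γ m * N n := by rw [← hNmn]; exact heq m
    have hγmunit := GammaR_det_isUnit (hγ m)
    have hNn : N n = (γ m)⁻¹ * (A * (1 + E) ^ m) := by
      rw [h2, ← Matrix.mul_assoc, Matrix.nonsing_inv_mul _ hγmunit, one_mul]
    have h3 : A * (1 + E) ^ n = (γ n * (γ m)⁻¹) * (A * (1 + E) ^ m) := by
      rw [h1, hNn, Matrix.mul_assoc]
    set G : Matrix (Fin 2) (Fin 2) ℝ := γ n * (γ m)⁻¹ with hG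
    have hGmem : G ∈ GammaR := GammaR_mul (hγ n) (GammaR_inv (hγ m))
    have hVmunit : IsUnit ((1 + E) ^ m).det := GammaR_det_isUnit (hVpow m)
    have h4 : A * (1 + E) ^ k = G * A := by
      have h5 : A * (1 + E) ^ k * (1 + E) ^ m = G * A * (1 + E) ^ m := by
        rw [Matrix.mul_assoc A, ← pow_add, ← hnk, Matrix.mul_assoc G]
        exact h3
      calc A * (1 + E) ^ k = A * (1 + E) ^ k * (1 + E) ^ m * ((1 + E) ^ m)⁻¹ := by
            rw [Matrix.mul_nonsing_inv_cancel_right _ _ hVmunit]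
        _ = G * A * (1 + E) ^ m * ((1 + E) ^ m)⁻¹ := by rw [h5]
        _ = G * A := by rw [Matrix.mul_nonsing_inv_cancel_right _ _ hVmunit]
    -- A * E * A⁻¹ = (k:ℝ)⁻¹ • (G - 1)
    have h6 : (k : ℝ) • (A * E * A⁻¹) = G - 1 := by
      have h7 : A * (1 + E) ^ k * A⁻¹ = G := by
        rw [h4, Matrix.mul_nonsing_inv_cancel_right _ _ hAunit]
      rw [unipotent_pow E hE k] at h7
      have : A * (1 + (k:ℝ) • E) * A⁻¹ = A * A⁻¹ + (k:ℝ) • (A * E * A⁻¹) := by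
        rw [mul_add, add_mul, Matrix.mul_smul, Matrix.smul_mul, mul_one]
      rw [this, Matrix.mul_nonsing_inv _ hAunit] at h7
      rw [← h7]; abel
    obtain ⟨g, hg⟩ := hGmem.1 i j
    have h8 : (k : ℝ) * (A * E * A⁻¹) i j = G i j - (1 : Matrix (Fin 2) (Fin 2) ℝ) i j := by
      have := congrFun (congrFun h6 i) j
      simpa [Matrix.sub_apply, Matrix.smul_apply, smul_eq_mul] using this
    have hone : ∃ e : ℚ, (1 : Matrix (Fin 2) (Fin 2) ℝ) i j = (e : ℝ) := by
      by_cases h : i = j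
      · exact ⟨1, by simp [h, Matrix.one_apply]⟩
      · exact ⟨0, by simp [Matrix.one_apply, h]⟩
    obtain ⟨e, he⟩ := hone
    refine ⟨((g : ℚ) - e) / k, ?_⟩
    have hkne : (k : ℝ) ≠ 0 := by positivity
    have h9 : (A * E * A⁻¹) i j = ((g : ℝ) - (e : ℝ)) / (k : ℝ) := by
      rw [eq_div_iff hkne, mul_comm, h8, hg, he]
    rw [h9]
    push_cast
    ring
  rcases lt_or_gt_of_ne hmn with h | h
  · exact main m n h hNeq'
  · exact main n m h hNeq'.symm

/-- A real number equal to a rational. -/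
def IsRatR (x : ℝ) : Prop := ∃ q : ℚ, x = (q : ℝ)

lemma IsRatR.add {x y : ℝ} (hx : IsRatR x) (hy : IsRatR y) : IsRatR (x + y) := by
  obtain ⟨p, hp⟩ := hx; obtain ⟨q, hq⟩ := hy
  exact ⟨p + q, by rw [hp, hq]; push_cast; ring⟩

lemma IsRatR.sub {x y : ℝ} (hx : IsRatR x) (hy : IsRatR y) : IsRatR (x - y) := by
  obtain ⟨p, hp⟩ := hx; obtain ⟨q, hq⟩ := hy
  exact ⟨p - q, by rw [hp, hq]; push_cast; ring⟩

lemma IsRatR.neg {x : ℝ} (hx : IsRatR x) : IsRatR (-x) := by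
  obtain ⟨p, hp⟩ := hx
  exact ⟨-p, by rw [hp]; push_cast; ring⟩

lemma IsRatR.div2 {x : ℝ} (hx : IsRatR x) : IsRatR (x / 2) := by
  obtain ⟨p, hp⟩ := hx
  exact ⟨p / 2, by rw [hp]; push_cast; ring⟩

lemma IsRatR.one : IsRatR (1 : ℝ) := ⟨1, by norm_num⟩

/-- If `A ∈ SL(2,ℝ)` is such that the double coset `Γ A Γ` (`Γ = SL(2,ℤ)`) consists of
finitely many left `Γ`-cosets, then some nonzero real multiple of `A` has rational entries. -/
theorem finite_cosets_implies_rational (A : Matrix (Fin 2) (Fin 2) ℝ) (hA : A.det = 1)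
    (hfin : ∃ F : Finset (Matrix (Fin 2) (Fin 2) ℝ), ↑F ⊆ doubleCoset A ∧
      ∀ M ∈ doubleCoset A, ∃ γ ∈ GammaR, ∃ N ∈ (F : Set (Matrix (Fin 2) (Fin 2) ℝ)),
        M = γ * N) :
    ∃ c : ℝ, c ≠ 0 ∧ ∀ i j, ∃ q : ℚ, c * A i j = (q : ℝ) := by
  set a := A 0 0 with ha
  set b := A 0 1 with hb
  set c := A 1 0 with hc
  set d := A 1 1 with hd
  have hdet : a * d - b * c = 1 := by rw [← hA, Matrix.det_fin_two]
  have hAunit : IsUnit A.det := by rw [hA]; exact isUnit_one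
  have hinv : A⁻¹ = !![d, -b; -c, a] := by
    rw [Matrix.inv_def, hA, Matrix.adjugate_fin_two]
    simp [ha, hb, hc, hd]
  -- the three nilpotents
  set E₁ : Matrix (Fin 2) (Fin 2) ℝ := !![0, 1; 0, 0] with hE₁def
  set E₂ : Matrix (Fin 2) (Fin 2) ℝ := !![0, 0; 1, 0] with hE₂def
  set E₃ : Matrix (Fin 2) (Fin 2) ℝ := !![1, -1; 1, -1] with hE₃def
  have hE₁ : E₁ * E₁ = 0 := by
    ext i j; fin_cases i <;> fin_cases j <;>
      simp [hE₁def, Matrix.mul_apply, Fin.sum_univ_two]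
  have hE₂ : E₂ * E₂ = 0 := by
    ext i j; fin_cases i <;> fin_cases j <;>
      simp [hE₂def, Matrix.mul_apply, Fin.sum_univ_two]
  have hE₃ : E₃ * E₃ = 0 := by
    ext i j; fin_cases i <;> fin_cases j <;>
      simp [hE₃def, Matrix.mul_apply, Fin.sum_univ_two]
  have hV₁ : (1 + E₁) ∈ GammaR := by
    constructor
    · intro i j
      fin_cases i <;> fin_cases j
      · exact ⟨1, by simp [hE₁def, Matrix.one_apply]⟩
      · exact ⟨1, by simp [hE₁def, Matrix.one_apply]⟩
      · exact ⟨0, by simp [hE₁def, Matrix.one_apply]⟩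
      · exact ⟨1, by simp [hE₁def, Matrix.one_apply]⟩
    · rw [Matrix.det_fin_two]; simp [hE₁def, Matrix.one_apply]
  have hV₂ : (1 + E₂) ∈ GammaR := by
    constructor
    · intro i j
      fin_cases i <;> fin_cases j
      · exact ⟨1, by simp [hE₂def, Matrix.one_apply]⟩
      · exact ⟨0, by simp [hE₂def, Matrix.one_apply]⟩
      · exact ⟨1, by simp [hE₂def, Matrix.one_apply]⟩
      · exact ⟨1, by simp [hE₂def, Matrix.one_apply]⟩
    · rw [Matrix.det_fin_two]; simp [hE₂def, Matrix.one_apply]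
  have hV₃ : (1 + E₃) ∈ GammaR := by
    constructor
    · intro i j
      fin_cases i <;> fin_cases j
      · exact ⟨2, by simp [hE₃def, Matrix.one_apply]; try norm_num⟩
      · exact ⟨-1, by simp [hE₃def, Matrix.one_apply]⟩
      · exact ⟨1, by simp [hE₃def, Matrix.one_apply]⟩
      · exact ⟨0, by simp [hE₃def, Matrix.one_apply]⟩
    · rw [Matrix.det_fin_two]; simp [hE₃def, Matrix.one_apply]; try ring
  have h1 := key A hA hfin E₁ hE₁ hV₁
  have h2 := key A hA hfin E₂ hE₂ hV₂
  have h3 := key A hA hfin E₃ hE₃ hV₃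
  -- compute the conjugates entrywise
  have conj : ∀ (E : Matrix (Fin 2) (Fin 2) ℝ) (i j : Fin 2),
      (A * E * A⁻¹) i j =
        (A i 0 * E 0 0 + A i 1 * E 1 0) * A⁻¹ 0 j + (A i 0 * E 0 1 + A i 1 * E 1 1) * A⁻¹ 1 j := by
    intro E i j
    rw [Matrix.mul_apply, Fin.sum_univ_two, Matrix.mul_apply, Fin.sum_univ_two,
      Matrix.mul_apply, Fin.sum_univ_two]
  -- products
  have haa : IsRatR (a * a) := by
    obtain ⟨q, hq⟩ := h1 0 1
    exact ⟨q, by rw [← hq, conj, hinv, hE₁def]; simp [ha, hb, hc, hd]; try ring⟩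
  have hcc : IsRatR (c * c) := by
    obtain ⟨q, hq⟩ := h1 1 0
    refine ⟨-q, ?_⟩
    have : (A * E₁ * A⁻¹) 1 0 = -(c * c) := by
      rw [conj, hinv, hE₁def]; simp [ha, hb, hc, hd]; try ring
    push_cast
    linarith [this.symm.trans hq]
  have hac : IsRatR (a * c) := by
    obtain ⟨q, hq⟩ := h1 1 1
    exact ⟨q, by rw [← hq, conj, hinv, hE₁def]; simp; try ring⟩
  have hbb : IsRatR (b * b) := by
    obtain ⟨q, hq⟩ := h2 0 1
    refine ⟨-q, ?_⟩
    have : (A * E₂ * A⁻¹) 0 1 = -(b * b) := by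
      rw [conj, hinv, hE₂def]; simp [ha, hb, hc, hd]; try ring
    push_cast
    linarith [this.symm.trans hq]
  have hdd : IsRatR (d * d) := by
    obtain ⟨q, hq⟩ := h2 1 0
    exact ⟨q, by rw [← hq, conj, hinv, hE₂def]; simp [ha, hb, hc, hd]; try ring⟩
  have hbd : IsRatR (b * d) := by
    obtain ⟨q, hq⟩ := h2 0 0
    exact ⟨q, by rw [← hq, conj, hinv, hE₂def]; simp [ha, hb, hc, hd]; try ring⟩
  have habsq : IsRatR ((a + b) * (a + b)) := by
    obtain ⟨q, hq⟩ := h3 0 1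
    refine ⟨-q, ?_⟩
    have : (A * E₃ * A⁻¹) 0 1 = -((a + b) * (a + b)) := by
      rw [conj, hinv, hE₃def]; simp; try ring
    push_cast
    linarith [this.symm.trans hq]
  have hcdsq : IsRatR ((c + d) * (c + d)) := by
    obtain ⟨q, hq⟩ := h3 1 0
    exact ⟨q, by rw [← hq, conj, hinv, hE₃def]; simp; try ring⟩
  have habcd : IsRatR ((a + b) * (c + d)) := by
    obtain ⟨q, hq⟩ := h3 0 0
    exact ⟨q, by rw [← hq, conj, hinv, hE₃def]; simp; try ring⟩
  -- derived products
  have hab : IsRatR (a * b) := by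
    have h := ((habsq.sub haa).sub hbb).div2
    have e : ((a + b) * (a + b) - a * a - b * b) / 2 = a * b := by ring
    rwa [e] at h
  have hcd : IsRatR (c * d) := by
    have h := ((hcdsq.sub hcc).sub hdd).div2
    have e : ((c + d) * (c + d) - c * c - d * d) / 2 = c * d := by ring
    rwa [e] at h
  have hadbc : IsRatR (a * d + b * c) := by
    have h := (habcd.sub hac).sub hbd
    have e : (a + b) * (c + d) - a * c - b * d = a * d + b * c := by ring
    rwa [e] at h
  have had : IsRatR (a * d) := by
    have h := (hadbc.add IsRatR.one).div2
    have e : (a * d + b * c + 1) / 2 = a * d := by rw [← hdet]; ring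
    rwa [e] at h
  have hbc : IsRatR (b * c) := by
    have h := (hadbc.sub IsRatR.one).div2
    have e : (a * d + b * c - 1) / 2 = b * c := by rw [← hdet]; ring
    rwa [e] at h
  -- conclude
  by_cases hane : a ≠ 0
  · refine ⟨a, hane, ?_⟩
    intro i j
    fin_cases i <;> fin_cases j
    · exact haa
    · exact hab
    · exact hac
    · exact had
  · push_neg at hane
    have hbne : b ≠ 0 := by
      intro hb0
      rw [hane, hb0] at hdet; simp at hdet
    refine ⟨b, hbne, ?_⟩
    intro i j
    fin_cases i <;> fin_cases j
    · exact ⟨(Classical.choose hab), by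
        rw [mul_comm]; exact Classical.choose_spec hab⟩
    · exact hbb
    · exact hbc
    · exact hbd
end
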